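/- Let n ≥ 4 and let B = {x ∈ X^n : at most one coordinate of x equals 2}, i.e., the set of words of X^n whose associated binary part has at most one 1. Then |B| = n^2 and B has diameter exactly 4: any two elements of B are at Hamming distance at most 4, and some pair of elements of B is at Hamming distance exactly 4. -/

import Mathlib

/-- A ternary word has exactly one coordinate equal to 0 (the `*` symbol). -/
def exactlyOneStar {n : ℕ} (x : Fin n → Fin 3) : Prop :=
  (Finset.univ.filter (fun i => x i = 0)).card = 1

instance {n : ℕ} : DecidablePred (exactlyOneStar (n := n)) := fun x =>
  decidable_of_iff ((Finset.univ.filter (fun i => x i = 0)).card = 1) Iff.rfl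

/-- The set `B` of words of `Xⁿ` whose binary part has at most one 1, i.e.
ternary words with exactly one coordinate equal to 0 and at most one
coordinate equal to 2. -/
def ballB (n : ℕ) : Finset (Fin n → Fin 3) :=
  Finset.univ.filter (fun x =>
    exactlyOneStar x ∧ (Finset.univ.filter (fun i => x i = 2)).card ≤ 1)

/-- The word with star at `i`, a `2` at `j` (if `j ≠ i`), and `1` elsewhere. -/
def wd {n : ℕ} (i j : Fin n) : Fin n → Fin 3 :=
  fun k => if k = i then 0 else if k = j then 2 else 1

lemma wd_eq_zero {n : ℕ} {i j k : Fin n} : wd i j k = 0 ↔ k = i := by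
  unfold wd; split_ifs with h1 h2
  · simp [h1]
  · exact ⟨fun h => absurd h (by decide), fun h => absurd h h1⟩
  · exact ⟨fun h => absurd h (by decide), fun h => absurd h h1⟩

lemma wd_eq_two {n : ℕ} {i j k : Fin n} : wd i j k = 2 ↔ k ≠ i ∧ k = j := by
  unfold wd; split_ifs with h1 h2
  · exact ⟨fun h => absurd h (by decide), fun h => absurd h1 h.1⟩
  · exact ⟨fun _ => ⟨h1, h2⟩, fun _ => rfl⟩
  · exact ⟨fun h => absurd h (by decide), fun h => absurd h.2 h2⟩

lemma wd_eq_one {n : ℕ} {i j k : Fin n} (h1 : k ≠ i) (h2 : k ≠ j) :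
    wd i j k = 1 := by simp [wd, h1, h2]

lemma fin3_eq_one {v : Fin 3} (h0 : v ≠ 0) (h2 : v ≠ 2) : v = 1 := by
  fin_cases v <;> simp_all

lemma filter_zero_wd {n : ℕ} (i j : Fin n) :
    Finset.univ.filter (fun k => wd i j k = 0) = {i} := by
  ext k; simp [wd_eq_zero]

lemma mem_ballB {n : ℕ} (i j : Fin n) : wd i j ∈ ballB n := by
  simp only [ballB, Finset.mem_filter, Finset.mem_univ, true_and]
  constructor
  · simp [exactlyOneStar, filter_zero_wd]
  · rcases eq_or_ne j i with h | h
    · have : Finset.univ.filter (fun k => wd i j k = 2) = ∅ := by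
        ext k; simp [wd_eq_two, h]; try tauto
      simp [this]
    · have : Finset.univ.filter (fun k => wd i j k = 2) = {j} := by
        ext k; simp [wd_eq_two]; try (intro hk; simp [hk, h])
      simp [this]

lemma mem_ballB_iff {n : ℕ} {x : Fin n → Fin 3} :
    x ∈ ballB n ↔ ∃ i j, x = wd i j := by
  constructor
  · intro hx
    simp only [ballB, Finset.mem_filter, Finset.mem_univ, true_and] at hx
    simp only [exactlyOneStar] at hx
    obtain ⟨h1, h2⟩ := hx
    obtain ⟨i, hi⟩ := Finset.card_eq_one.mp h1
    have hxi : x i = 0 := by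
      have : i ∈ Finset.univ.filter (fun k => x k = 0) := by simp [hi]
      simpa using this
    have huniq : ∀ k, x k = 0 → k = i := by
      intro k hk
      have : k ∈ Finset.univ.filter (fun k => x k = 0) := by simp [hk]
      simpa [hi] using this
    interval_cases h : (Finset.univ.filter (fun k => x k = 2)).card
    · -- no 2
      refine ⟨i, i, funext fun k => ?_⟩
      rcases eq_or_ne k i with rfl | hk
      · simp [wd, hxi]
      · have hk2 : x k ≠ 2 := by
          intro h2'
          have : k ∈ Finset.univ.filter (fun k => x k = 2) := by simp [h2']
          rw [Finset.card_eq_zero.mp h] at this; simp at this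
        have hk0 : x k ≠ 0 := fun h0 => hk (huniq k h0)
        rw [fin3_eq_one hk0 hk2, wd_eq_one hk hk]
    · -- one 2
      obtain ⟨j, hj⟩ := Finset.card_eq_one.mp h
      have hxj : x j = 2 := by
        have : j ∈ Finset.univ.filter (fun k => x k = 2) := by simp [hj]
        simpa using this
      refine ⟨i, j, funext fun k => ?_⟩
      rcases eq_or_ne k i with rfl | hk
      · simp [wd, hxi]
      rcases eq_or_ne k j with rfl | hkj
      · rw [hxj, eq_comm, wd_eq_two]; exact ⟨hk, rfl⟩
      · have hk2 : x k ≠ 2 := by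
          intro h2'
          have : k ∈ Finset.univ.filter (fun k => x k = 2) := by simp [h2']
          rw [hj] at this; simp at this; exact hkj this
        have hk0 : x k ≠ 0 := fun h0 => hk (huniq k h0)
        rw [fin3_eq_one hk0 hk2, wd_eq_one hk hkj]
  · rintro ⟨i, j, rfl⟩; exact mem_ballB i j

lemma wd_injective {n : ℕ} :
    Function.Injective (fun p : Fin n × Fin n => wd p.1 p.2) := by
  rintro ⟨i, j⟩ ⟨i', j'⟩ h
  simp only at h
  have hi : i = i' := by
    have h0 : wd i' j' i = 0 := by rw [← h]; exact wd_eq_zero.mpr rfl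
    exact (wd_eq_zero.mp h0)
  subst hi
  have hj : j = j' := by
    rcases eq_or_ne j i with hji | hji
    · rcases eq_or_ne j' i with hji' | hji'
      · rw [hji, hji']
      · have h2 : wd i j j' = 2 := by rw [h]; exact wd_eq_two.mpr ⟨hji', rfl⟩
        obtain ⟨_, h3⟩ := wd_eq_two.mp h2
        exact absurd (h3 ▸ hji) hji'
    · have h2 : wd i j' j = 2 := by rw [← h]; exact wd_eq_two.mpr ⟨hji, rfl⟩
      exact (wd_eq_two.mp h2).2
  rw [hj]

lemma ballB_eq_image (n : ℕ) :
    ballB n = Finset.image (fun p : Fin n × Fin n => wd p.1 p.2) Finset.univ := by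
  ext x
  simp [mem_ballB_iff, Finset.mem_image, eq_comm]

theorem ballB_card_and_diameter (n : ℕ) (hn : 4 ≤ n) :
    (ballB n).card = n ^ 2 ∧
    (∀ x ∈ ballB n, ∀ y ∈ ballB n, hammingDist x y ≤ 4) ∧
    (∃ x ∈ ballB n, ∃ y ∈ ballB n, hammingDist x y = 4) := by
  refine ⟨?_, ?_, ?_⟩
  · rw [ballB_eq_image, Finset.card_image_of_injective _ wd_injective]
    simp [sq]
  · intro x hx y hy
    obtain ⟨i, j, rfl⟩ := mem_ballB_iff.mp hx
    obtain ⟨i', j', rfl⟩ := mem_ballB_iff.mp hy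
    have hsub : Finset.univ.filter (fun k => wd i j k ≠ wd i' j' k) ⊆
        ({i, j, i', j'} : Finset (Fin n)) := by
      intro k hk
      simp only [Finset.mem_filter, Finset.mem_univ, true_and] at hk
      by_contra hmem
      simp only [Finset.mem_insert, Finset.mem_singleton, not_or] at hmem
      obtain ⟨h1, h2, h3, h4⟩ := hmem
      exact hk (by rw [wd_eq_one h1 h2, wd_eq_one h3 h4])
    have := Finset.card_le_card hsub
    have h1 := Finset.card_insert_le i ({j, i', j'} : Finset (Fin n))
    have h2 := Finset.card_insert_le j ({i', j'} : Finset (Fin n))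
    have h3 := Finset.card_insert_le i' ({j'} : Finset (Fin n))
    have h4 : ({j'} : Finset (Fin n)).card = 1 := Finset.card_singleton _
    show (Finset.univ.filter (fun k => wd i j k ≠ wd i' j' k)).card ≤ 4
    omega
  · set a : Fin n := ⟨0, by omega⟩
    set b : Fin n := ⟨1, by omega⟩
    set c : Fin n := ⟨2, by omega⟩
    set d : Fin n := ⟨3, by omega⟩
    have hab : a ≠ b := by simp [a, b, Fin.ext_iff]
    have hac : a ≠ c := by simp [a, c, Fin.ext_iff]
    have had : a ≠ d := by simp [a, d, Fin.ext_iff]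
    have hbc : b ≠ c := by simp [b, c, Fin.ext_iff]
    have hbd : b ≠ d := by simp [b, d, Fin.ext_iff]
    have hcd : c ≠ d := by simp [c, d, Fin.ext_iff]
    refine ⟨wd a b, mem_ballB a b, wd c d, mem_ballB c d, ?_⟩
    have hset : Finset.univ.filter (fun k => wd a b k ≠ wd c d k) =
        ({a, b, c, d} : Finset (Fin n)) := by
      ext k
      simp only [Finset.mem_filter, Finset.mem_univ, true_and,
        Finset.mem_insert, Finset.mem_singleton]
      constructor
      · intro hk
        by_contra hmem
        push_neg at hmem
        obtain ⟨h1, h2, h3, h4⟩ := hmem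
        exact hk (by rw [wd_eq_one h1 h2, wd_eq_one h3 h4])
      · rintro (rfl | rfl | rfl | rfl)
        · rw [wd_eq_zero.mpr rfl, wd_eq_one hac had]; decide
        · rw [wd_eq_two.mpr ⟨Ne.symm hab, rfl⟩, wd_eq_one hbc hbd]; decide
        · rw [wd_eq_one (Ne.symm hac) (Ne.symm hbc), wd_eq_zero.mpr rfl]; decide
        · rw [wd_eq_one (Ne.symm had) (Ne.symm hbd), wd_eq_two.mpr ⟨Ne.symm hcd, rfl⟩]; decide
    show (Finset.univ.filter (fun k => wd a b k ≠ wd c d k)).card = 4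
    rw [hset]
    rw [Finset.card_insert_of_notMem (by simp [hab, hac, had]),
      Finset.card_insert_of_notMem (by simp [hbc, hbd]),
      Finset.card_insert_of_notMem (by simp [hcd]),
      Finset.card_singleton]
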